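/- ACE bounds: Under assumption (i) (joint independence of the instrument from all potential outcomes), the average causal effect ACE(X → Y) = P(Y(x_1) = 1) − P(Y(x_0) = 1) satisfies 1 − g(1, 0) − g(0, 1) ≤ ACE(X → Y) ≤ g(0, 0) + g(1, 1) − 1. -/

import Mathlib

open MeasureTheory ProbabilityTheory

/-- The bound `g(i, j)` of Theorem 2, expressed in terms of conditional laws
`p z x y` (interpreted as `P(X = x, Y = y | Z = z)`):
`g(i,j) = min{ min_z [ p_z(X=i,Y=j) + p_z(X=1−i) ],`
`min_{z ≠ z̃} [ p_z(X=i,Y=j) + p_z(X=1−i,Y=0) + p_{z̃}(X=i,Y=j) + p_{z̃}(X=1−i,Y=1) ] }`,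
where `p_z(X = 1−i) = p_z(X=1−i, Y=0) + p_z(X=1−i, Y=1)`. -/
noncomputable def gOf {K : ℕ} (hK : 2 ≤ K) (p : Fin K → Fin 2 → Fin 2 → ℝ)
    (i j : Fin 2) : ℝ :=
  min
    ((Finset.univ : Finset (Fin K)).inf'
      ⟨⟨0, by omega⟩, Finset.mem_univ _⟩
      (fun z => p z i j + (p z (1 - i) 0 + p z (1 - i) 1)))
    (((Finset.univ : Finset (Fin K × Fin K)).filter (fun q => q.1 ≠ q.2)).inf'
      ⟨(⟨0, by omega⟩, ⟨1, by omega⟩), by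
        simp only [Finset.mem_filter, Finset.mem_univ, true_and]
        exact fun h => absurd (congrArg Fin.val h) (by simp)⟩
      (fun q => p q.1 i j + p q.1 (1 - i) 0 + p q.2 i j + p q.2 (1 - i) 1))


private lemma fin2_cases (a : Fin 2) : a = 0 ∨ a = 1 := by revert a; decide
private lemma fin2_ne {a i : Fin 2} (h : a ≠ i) : a = 1 - i := by revert h; revert a i; decide
private lemma fin2_ne0 {a : Fin 2} (h : a ≠ 0) : a = 1 := by revert h; revert a; decide

private lemma hp_lemma
    {Ω : Type*} [MeasurableSpace Ω] (P : Measure Ω) [IsProbabilityMeasure P]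
    {K : ℕ}
    (Z : Ω → Fin K) (Xz : Fin K → Ω → Fin 2) (Y0 Y1 : Ω → Fin 2)
    (hZ : Measurable Z)
    (X : Ω → Fin 2) (hX : ∀ ω, X ω = Xz (Z ω) ω)
    (Y : Ω → Fin 2) (hY : ∀ ω, Y ω = if X ω = 0 then Y0 ω else Y1 ω)
    (hpos : ∀ z, 0 < P (Z ⁻¹' {z}))
    (hindep : IndepFun Z (fun ω => (Y0 ω, Y1 ω, fun z => Xz z ω)) P)
    (z : Fin K) (x y : Fin 2) :
    (P[|Z ⁻¹' {z}] {ω | X ω = x ∧ Y ω = y}).toReal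
      = (P {ω | Xz z ω = x ∧ (if x = 0 then Y0 ω else Y1 ω) = y}).toReal := by
  have hs : MeasurableSet (Z ⁻¹' {z}) := hZ (measurableSet_singleton z)
  have hinter : Z ⁻¹' {z} ∩ {ω | X ω = x ∧ Y ω = y}
      = Z ⁻¹' {z} ∩ ((fun ω => (Y0 ω, Y1 ω, fun z => Xz z ω)) ⁻¹'
          {p | p.2.2 z = x ∧ (if x = 0 then p.1 else p.2.1) = y}) := by
    ext ω
    simp only [Set.mem_inter_iff, Set.mem_preimage, Set.mem_singleton_iff, Set.mem_setOf_eq]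
    refine and_congr_right fun hz => ?_
    have hXe : X ω = Xz z ω := by rw [hX, hz]
    rcases fin2_cases x with rfl | rfl <;>
      simp only [hY ω, hXe, if_true, if_pos rfl] <;>
      by_cases h0 : Xz z ω = 0 <;> simp [h0]
  rw [cond_apply hs, hinter,
    hindep.measure_inter_preimage_eq_mul _ _ (measurableSet_singleton z)
      ((Set.to_countable _).measurableSet),
    ← mul_assoc, ENNReal.inv_mul_cancel (hpos z).ne' (measure_ne_top _ _), one_mul]
  rfl

private lemma toReal_le3 {Ω : Type*} [MeasurableSpace Ω] (P : Measure Ω) [IsProbabilityMeasure P]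
    {A B C D : Set Ω} (h : A ⊆ B ∪ C ∪ D) :
    (P A).toReal ≤ (P B).toReal + (P C).toReal + (P D).toReal := by
  have h1 : P A ≤ P B + P C + P D :=
    (measure_mono h).trans ((measure_union_le _ _).trans
      (add_le_add_left (measure_union_le _ _) _))
  have := ENNReal.toReal_mono (by finiteness) h1
  rwa [ENNReal.toReal_add (by finiteness) (by finiteness),
    ENNReal.toReal_add (by finiteness) (by finiteness)] at this

private lemma toReal_le4 {Ω : Type*} [MeasurableSpace Ω] (P : Measure Ω) [IsProbabilityMeasure P]
    {A B C D E : Set Ω} (h : A ⊆ B ∪ C ∪ D ∪ E) :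
    (P A).toReal ≤ (P B).toReal + (P C).toReal + (P D).toReal + (P E).toReal := by
  have h1 : P A ≤ P B + P C + P D + P E :=
    (measure_mono h).trans ((measure_union_le _ _).trans (add_le_add_left
      ((measure_union_le _ _).trans (add_le_add_left (measure_union_le _ _) _)) _))
  have := ENNReal.toReal_mono (by finiteness) h1
  rwa [ENNReal.toReal_add (by finiteness) (by finiteness),
    ENNReal.toReal_add (by finiteness) (by finiteness),
    ENNReal.toReal_add (by finiteness) (by finiteness)] at this

private lemma key_bound
    {Ω : Type*} [MeasurableSpace Ω] (P : Measure Ω) [IsProbabilityMeasure P]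
    {K : ℕ} (hK : 2 ≤ K)
    (Z : Ω → Fin K) (Xz : Fin K → Ω → Fin 2) (Y0 Y1 : Ω → Fin 2)
    (hZ : Measurable Z)
    (X : Ω → Fin 2) (hX : ∀ ω, X ω = Xz (Z ω) ω)
    (Y : Ω → Fin 2) (hY : ∀ ω, Y ω = if X ω = 0 then Y0 ω else Y1 ω)
    (hpos : ∀ z, 0 < P (Z ⁻¹' {z}))
    (hindep : IndepFun Z (fun ω => (Y0 ω, Y1 ω, fun z => Xz z ω)) P)
    (i j : Fin 2) :
    (P {ω | (if i = 0 then Y0 ω else Y1 ω) = j}).toReal ≤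
      gOf hK (fun z x y => (P[|Z ⁻¹' {z}] {ω | X ω = x ∧ Y ω = y}).toReal) i j := by
  have hp := hp_lemma P Z Xz Y0 Y1 hZ X hX Y hY hpos hindep
  refine le_min (Finset.le_inf' _ _ fun z _ => ?_) (Finset.le_inf' _ _ fun q hq => ?_)
  · have incl : {ω | (if i = 0 then Y0 ω else Y1 ω) = j} ⊆
        {ω | Xz z ω = i ∧ (if i = 0 then Y0 ω else Y1 ω) = j}
        ∪ {ω | Xz z ω = 1 - i ∧ (if 1 - i = 0 then Y0 ω else Y1 ω) = 0}
        ∪ {ω | Xz z ω = 1 - i ∧ (if 1 - i = 0 then Y0 ω else Y1 ω) = 1} := by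
      intro ω hω
      by_cases hx : Xz z ω = i
      · exact Or.inl (Or.inl ⟨hx, hω⟩)
      · rcases fin2_cases (if 1 - i = 0 then Y0 ω else Y1 ω) with h | h
        · exact Or.inl (Or.inr ⟨fin2_ne hx, h⟩)
        · exact Or.inr ⟨fin2_ne hx, h⟩
    have h3 := toReal_le3 P incl
    simp only [hp]
    linarith
  · have incl : {ω | (if i = 0 then Y0 ω else Y1 ω) = j} ⊆
        {ω | Xz q.1 ω = i ∧ (if i = 0 then Y0 ω else Y1 ω) = j}
        ∪ {ω | Xz q.1 ω = 1 - i ∧ (if 1 - i = 0 then Y0 ω else Y1 ω) = 0}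
        ∪ {ω | Xz q.2 ω = i ∧ (if i = 0 then Y0 ω else Y1 ω) = j}
        ∪ {ω | Xz q.2 ω = 1 - i ∧ (if 1 - i = 0 then Y0 ω else Y1 ω) = 1} := by
      intro ω hω
      by_cases hx1 : Xz q.1 ω = i
      · exact Or.inl (Or.inl (Or.inl ⟨hx1, hω⟩))
      · by_cases hv : (if 1 - i = 0 then Y0 ω else Y1 ω) = 0
        · exact Or.inl (Or.inl (Or.inr ⟨fin2_ne hx1, hv⟩))
        · by_cases hx2 : Xz q.2 ω = i
          · exact Or.inl (Or.inr ⟨hx2, hω⟩)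
          · exact Or.inr ⟨fin2_ne hx2, fin2_ne0 hv⟩
    have h4 := toReal_le4 P incl
    simp only [hp]
    linarith

private lemma compl_toReal {Ω : Type*} [MeasurableSpace Ω] (P : Measure Ω)
    [IsProbabilityMeasure P] (W : Ω → Fin 2) (hW : Measurable W) :
    (P {ω | W ω = 0}).toReal = 1 - (P {ω | W ω = 1}).toReal := by
  have hc : {ω | W ω = 0} = {ω | W ω = 1}ᶜ := by
    ext ω; simp only [Set.mem_setOf_eq, Set.mem_compl_iff]
    rcases fin2_cases (W ω) with h | h <;> simp [h]
  have hm : MeasurableSet {ω | W ω = 1} := hW (measurableSet_singleton 1)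
  rw [hc, measure_compl hm (measure_ne_top _ _), measure_univ,
    ENNReal.toReal_sub_of_le prob_le_one (by simp), ENNReal.toReal_one]


/-- ACE bounds: under assumption (i) (joint independence of the instrument
from all potential outcomes), the average causal effect
`ACE(X → Y) = P(Y(x₁) = 1) − P(Y(x₀) = 1)` satisfies
`1 − g(1,0) − g(0,1) ≤ ACE(X → Y) ≤ g(0,0) + g(1,1) − 1`, where `g` is evaluated at the
observed conditional laws `P(X = x, Y = y | Z = z)`. -/
theorem stmt10
    {Ω : Type*} [MeasurableSpace Ω] (P : Measure Ω) [IsProbabilityMeasure P]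
    (K : ℕ) (hK : 2 ≤ K)
    (Z : Ω → Fin K) (Xz : Fin K → Ω → Fin 2) (Y0 Y1 : Ω → Fin 2)
    (hZ : Measurable Z) (hXz : ∀ z, Measurable (Xz z))
    (hY0 : Measurable Y0) (hY1 : Measurable Y1)
    (X : Ω → Fin 2) (hX : ∀ ω, X ω = Xz (Z ω) ω)
    (Y : Ω → Fin 2) (hY : ∀ ω, Y ω = if X ω = 0 then Y0 ω else Y1 ω)
    (hpos : ∀ z, 0 < P (Z ⁻¹' {z}))
    (hindep : IndepFun Z (fun ω => (Y0 ω, Y1 ω, fun z => Xz z ω)) P) :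
    1 - gOf hK (fun z x y => (P[|Z ⁻¹' {z}] {ω | X ω = x ∧ Y ω = y}).toReal) 1 0
      - gOf hK (fun z x y => (P[|Z ⁻¹' {z}] {ω | X ω = x ∧ Y ω = y}).toReal) 0 1 ≤
      (P {ω | Y1 ω = 1}).toReal - (P {ω | Y0 ω = 1}).toReal ∧
    (P {ω | Y1 ω = 1}).toReal - (P {ω | Y0 ω = 1}).toReal ≤
      gOf hK (fun z x y => (P[|Z ⁻¹' {z}] {ω | X ω = x ∧ Y ω = y}).toReal) 0 0
      + gOf hK (fun z x y => (P[|Z ⁻¹' {z}] {ω | X ω = x ∧ Y ω = y}).toReal) 1 1 - 1 := by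
  have k00 := key_bound P hK Z Xz Y0 Y1 hZ X hX Y hY hpos hindep 0 0
  have k01 := key_bound P hK Z Xz Y0 Y1 hZ X hX Y hY hpos hindep 0 1
  have k10 := key_bound P hK Z Xz Y0 Y1 hZ X hX Y hY hpos hindep 1 0
  have k11 := key_bound P hK Z Xz Y0 Y1 hZ X hX Y hY hpos hindep 1 1
  have e0 : ∀ j : Fin 2, {ω | (if (0 : Fin 2) = 0 then Y0 ω else Y1 ω) = j}
      = {ω | Y0 ω = j} := fun j => by simp
  have e1 : ∀ j : Fin 2, {ω | (if (1 : Fin 2) = 0 then Y0 ω else Y1 ω) = j}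
      = {ω | Y1 ω = j} := fun j => by simp
  rw [e0] at k00 k01
  rw [e1] at k10 k11
  rw [compl_toReal P Y0 hY0] at k00
  rw [compl_toReal P Y1 hY1] at k10
  exact ⟨by linarith, by linarith⟩
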